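/- arXiv:1404.6624 — 2 statements merged into one kernel-verified Lean document; each statement's English description precedes it below -/
import Mathlib

section
/- Let ρ ≥ 1 and k ≥ 0 be integers, and let θ ∈ ℂ be either a positive real number or θ = iβ with β ∈ [0,π). Set v := (e^{θ/2^{k+1}} + e^{−θ/2^{k+1}})/2 (which is nonzero) and w := e^{−θ/2^{k+1}}, and define for z ≠ 0: B(z) := (z + z⁻¹ + 2v)^ρ / (2^{2ρ−1}·v^ρ), c(z) := Σ_{j=0}^{ρ−1} (−1)^j·binom(ρ+j−1, j)·(4v)^{−j}·(z + z⁻¹ − 2v)^j, and a(z) := B(z)·c(z). Then a(w) = a(w⁻¹) = 2 and, for every s = 1, …, ρ−1, the s-th complex derivatives of a at w and at w⁻¹ are both 0. -/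
open Complex Finset

private lemma geo (t : ℂ) (n : ℕ) : t * ∑ i ∈ range n, (1 + t) ^ i = (1 + t) ^ n - 1 := by
  have h := geom_sum_mul (1 + t) n
  linear_combination h

private lemma pascal1 (m ρ : ℕ) (hm : 1 ≤ m) :
    (ρ + m).choose m = (ρ + m - 1).choose m + (m + ρ - 1).choose ρ := by
  obtain ⟨m', rfl⟩ : ∃ m', m = m' + 1 := ⟨m - 1, by omega⟩
  have h1 : (ρ + (m' + 1)).choose (m' + 1) = (ρ + m').choose m' + (ρ + m').choose (m' + 1) := by
    rw [show ρ + (m' + 1) = (ρ + m') + 1 by omega]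
    exact Nat.choose_succ_succ _ _
  have h2 : (ρ + m').choose m' = (ρ + m').choose ρ := by
    have h := Nat.choose_symm (Nat.le_add_right ρ m')
    rwa [show ρ + m' - ρ = m' by omega] at h
  rw [show ρ + (m' + 1) - 1 = ρ + m' by omega, show m' + 1 + ρ - 1 = ρ + m' by omega]
  omega

private lemma pascal2 (m ρ : ℕ) : (m + ρ).choose ρ = (ρ + m).choose m := by
  have h := Nat.choose_symm (Nat.le_add_right ρ m)
  rw [show ρ + m - ρ = m by omega] at h
  rw [Nat.add_comm m ρ, h]

private lemma step_id (m : ℕ) (hm : 1 ≤ m) (ρ : ℕ) (t : ℂ) :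
    ((ρ + m - 1).choose m : ℂ) * (1 + t) ^ ρ
      = (∑ i ∈ range ρ, ((m + i - 1).choose i : ℂ) * (1 + t) ^ i)
        + t * ∑ i ∈ range ρ, ((m + i).choose i : ℂ) * (1 + t) ^ i := by
  induction ρ with
  | zero =>
      simp [Nat.choose_eq_zero_of_lt (show m - 1 < m by omega),
        show (0 : ℕ) + m - 1 = m - 1 by omega]
  | succ ρ IH =>
      rw [sum_range_succ, sum_range_succ]
      have h1 : (((ρ + m).choose m : ℕ) : ℂ)
          = ((ρ + m - 1).choose m : ℂ) + ((m + ρ - 1).choose ρ : ℂ) := by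
        exact_mod_cast congrArg (Nat.cast : ℕ → ℂ) (pascal1 m ρ hm)
      have h2 : (((m + ρ).choose ρ : ℕ) : ℂ) = ((ρ + m).choose m : ℂ) := by
        exact_mod_cast congrArg (Nat.cast : ℕ → ℂ) (pascal2 m ρ)
      rw [show ρ + 1 + m - 1 = ρ + m by omega]
      linear_combination IH + ((1 + t) ^ ρ) * h1 - (t * (1 + t) ^ ρ) * h2

private lemma trunc_id (ρ : ℕ) (hρ : 1 ≤ ρ) (m : ℕ) (hm : 1 ≤ m) (t : ℂ) :
    (1 + t) ^ ρ * ∑ j ∈ range m, (-1 : ℂ) ^ j * ((ρ + j - 1).choose j : ℂ) * t ^ j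
      = 1 - (-t) ^ m * ∑ i ∈ range ρ, ((m + i - 1).choose i : ℂ) * (1 + t) ^ i := by
  induction m, hm using Nat.le_induction with
  | base =>
      have hsum1 : ∑ j ∈ range 1, (-1 : ℂ) ^ j * ((ρ + j - 1).choose j : ℂ) * t ^ j = 1 := by
        simp
      rw [hsum1, mul_one]
      have hS : ∀ i ∈ range ρ, ((1 + i - 1).choose i : ℂ) * (1 + t) ^ i = (1 + t) ^ i := by
        intro i _
        rw [show 1 + i - 1 = i by omega, Nat.choose_self, Nat.cast_one, one_mul]
      rw [sum_congr rfl hS, pow_one]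
      linear_combination -(geo t ρ)
  | succ m hm IH =>
      rw [sum_range_succ, mul_add]
      have hstep := step_id m hm ρ t
      have hpow : (-t) ^ (m + 1) = (-t) ^ m * (-t) := by ring
      calc (1 + t) ^ ρ * (∑ j ∈ range m, (-1:ℂ) ^ j * ((ρ + j - 1).choose j : ℂ) * t ^ j)
            + (1 + t) ^ ρ * ((-1:ℂ) ^ m * ((ρ + m - 1).choose m : ℂ) * t ^ m)
          = 1 - (-t) ^ m * ∑ i ∈ range ρ, ((m + i - 1).choose i : ℂ) * (1 + t) ^ i
            + (-1:ℂ) ^ m * t ^ m * (((ρ + m - 1).choose m : ℂ) * (1 + t) ^ ρ) := by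
            rw [IH]; ring
        _ = 1 - (-t) ^ (m + 1) * ∑ i ∈ range ρ, ((m + 1 + i - 1).choose i : ℂ) * (1 + t) ^ i := by
            rw [hstep]
            have he : ∀ i ∈ range ρ, ((m + 1 + i - 1).choose i : ℂ) * (1 + t) ^ i
                = ((m + i).choose i : ℂ) * (1 + t) ^ i := by
              intro i _; rw [show m + 1 + i - 1 = m + i by omega]
            rw [sum_congr rfl he]
            have hneg : (-t) ^ m = (-1 : ℂ) ^ m * t ^ m := by rw [neg_pow]
            rw [hpow, hneg]
            ring

private lemma vanish {s : Set ℂ} (hs : IsOpen s) :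
    ∀ (n ρ : ℕ), n < ρ → ∀ (r : ℂ → ℂ), AnalyticOnNhd ℂ r s → ∀ w ∈ s,
      iteratedDeriv n (fun z => (z - w) ^ ρ * r z) w = 0 := by
  intro n
  induction n with
  | zero =>
      intro ρ hρ r hr w hw
      simp [iteratedDeriv_zero, zero_pow (show ρ ≠ 0 by omega)]
  | succ n IH =>
      intro ρ hρ r hr w hw
      obtain ⟨ρ', rfl⟩ : ∃ ρ', ρ = ρ' + 1 := ⟨ρ - 1, by omega⟩
      rw [iteratedDeriv_succ']
      have hev : deriv (fun z => (z - w) ^ (ρ' + 1) * r z)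
          =ᶠ[nhds w] fun z => (z - w) ^ ρ' * ((((ρ' : ℂ) + 1) * r z + (z - w) * deriv r z)) := by
        filter_upwards [hs.mem_nhds hw] with z hz
        have hrz : HasDerivAt r (deriv r z) z := ((hr z hz).differentiableAt).hasDerivAt
        have h1 : HasDerivAt (fun z => (z - w) ^ (ρ' + 1) * r z)
            ((((ρ' + 1 : ℕ) : ℂ) * (z - w) ^ (ρ' + 1 - 1) * 1) * r z
              + (z - w) ^ (ρ' + 1) * deriv r z) z :=
          (((hasDerivAt_id z).sub_const w).pow _).mul hrz
        rw [h1.deriv]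
        push_cast
        ring
      rw [hev.iteratedDeriv_eq]
      exact IH ρ' (by omega) _
        ((analyticOnNhd_const.mul hr).add
          (((analyticOnNhd_id).sub analyticOnNhd_const).mul hr.deriv)) w hw

private lemma iter_const_add {n : ℕ} (hn : 0 < n) (c : ℂ) (f : ℂ → ℂ) (x : ℂ) :
    iteratedDeriv n (fun z => c + f z) x = iteratedDeriv n f x := by
  simp only [← iteratedDerivWithin_univ]
  exact iteratedDerivWithin_const_add hn c

private lemma key_at (ρ : ℕ) (hρ : 1 ≤ ρ) (v w u : ℂ) (hw0 : w ≠ 0) (hv : v ≠ 0)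
    (hwu : w * u = 1) (hsum : w + u = 2 * v) (a : ℂ → ℂ)
    (ha : ∀ z : ℂ, z ≠ 0 → a z = (z + z⁻¹ + 2 * v) ^ ρ / (2 ^ (2 * ρ - 1) * v ^ ρ) *
      ∑ j ∈ range ρ, (-1 : ℂ) ^ j * (((ρ + j - 1).choose j : ℕ) : ℂ) * (4 * v) ^ (-(j : ℤ)) *
        (z + z⁻¹ - 2 * v) ^ j) :
    a w = 2 ∧ ∀ s : ℕ, 1 ≤ s → s ≤ ρ - 1 → iteratedDeriv s a w = 0 := by
  set r : ℂ → ℂ := fun z => -2 * (-(z - u) / (4 * v * z)) ^ ρ *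
    ∑ i ∈ range ρ, (((ρ + i - 1).choose i : ℕ) : ℂ) * ((z + z⁻¹ + 2 * v) / (4 * v)) ^ i with hr
  have h4v : (4 : ℂ) * v ≠ 0 := mul_ne_zero (by norm_num) hv
  have key : ∀ z : ℂ, z ≠ 0 → a z = 2 + (z - w) ^ ρ * r z := by
    intro z hz
    rw [ha z hz]
    set t : ℂ := (z + z⁻¹ - 2 * v) / (4 * v) with ht
    have h1pt : (z + z⁻¹ + 2 * v) / (4 * v) = 1 + t := by
      rw [ht, one_add_div h4v]; congr 1; ring
    have hB2 : (z + z⁻¹ + 2 * v) ^ ρ / (2 ^ (2 * ρ - 1) * v ^ ρ) = 2 * (1 + t) ^ ρ := by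
      rw [← h1pt, div_pow]
      have h2p : (2 : ℂ) ^ (2 * ρ - 1) * 2 = 2 ^ (2 * ρ) := by
        rw [← pow_succ, show 2 * ρ - 1 + 1 = 2 * ρ by omega]
      have h4p : ((4 : ℂ) * v) ^ ρ = 2 ^ (2 * ρ) * v ^ ρ := by
        rw [mul_pow, show (4:ℂ) = 2 ^ 2 by norm_num, ← pow_mul]
      rw [h4p, ← h2p]
      have hd1 : (2 : ℂ) ^ (2 * ρ - 1) * v ^ ρ ≠ 0 :=
        mul_ne_zero (pow_ne_zero _ two_ne_zero) (pow_ne_zero _ hv)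
      have hd2 : (2 : ℂ) ^ (2 * ρ - 1) * 2 * v ^ ρ ≠ 0 :=
        mul_ne_zero (mul_ne_zero (pow_ne_zero _ two_ne_zero) two_ne_zero) (pow_ne_zero _ hv)
      rw [← mul_div_assoc, div_eq_div_iff hd1 hd2]
      ring
    have hcs : (∑ j ∈ range ρ, (-1 : ℂ) ^ j * (((ρ + j - 1).choose j : ℕ) : ℂ) *
        (4 * v) ^ (-(j : ℤ)) * (z + z⁻¹ - 2 * v) ^ j)
        = ∑ j ∈ range ρ, (-1 : ℂ) ^ j * (((ρ + j - 1).choose j : ℕ) : ℂ) * t ^ j := by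
      refine sum_congr rfl fun j _ => ?_
      rw [zpow_neg, zpow_natCast, ht, div_pow]
      ring
    rw [hB2, hcs, mul_assoc, trunc_id ρ hρ ρ hρ t]
    have hfac : (-t) ^ ρ = (z - w) ^ ρ * (-(z - u) / (4 * v * z)) ^ ρ := by
      rw [← mul_pow]
      congr 1
      rw [ht, mul_div_assoc', neg_div', div_eq_div_iff h4v (mul_ne_zero h4v hz)]
      have hzi : z * z⁻¹ = 1 := mul_inv_cancel₀ hz
      linear_combination (4*v) * hwu - (4*v) * hzi - (4*v*z) * hsum
    rw [hr]
    simp only [← h1pt]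
    rw [hfac]
    ring
  have hwmem : w ∈ ({0}ᶜ : Set ℂ) := hw0
  have hopen : IsOpen ({0}ᶜ : Set ℂ) := isOpen_compl_singleton
  have hra : AnalyticOnNhd ℂ r ({0}ᶜ : Set ℂ) := by
    intro z hz
    have hz0 : z ≠ 0 := hz
    apply AnalyticAt.mul
    · apply AnalyticAt.mul analyticAt_const
      apply AnalyticAt.pow
      apply AnalyticAt.div
      · exact (analyticAt_id.sub analyticAt_const).neg
      · exact analyticAt_const.mul analyticAt_id
      · simp [hz0, hv]
    · apply Finset.analyticAt_fun_sum
      intro i _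
      apply AnalyticAt.mul analyticAt_const
      apply AnalyticAt.pow
      apply AnalyticAt.div
      · exact (analyticAt_id.add (analyticAt_id.inv hz0)).add analyticAt_const
      · exact analyticAt_const
      · exact h4v
  constructor
  · rw [key w hw0]
    simp [zero_pow (show ρ ≠ 0 by omega)]
  · intro s hs1 hs2
    have hev : a =ᶠ[nhds w] fun z => 2 + (z - w) ^ ρ * r z := by
      filter_upwards [eventually_ne_nhds hw0] with z hz
      exact key z hz
    rw [hev.iteratedDeriv_eq]
    rw [iter_const_add hs1 2 _ w]
    exact vanish hopen s ρ (by omega) r hra w hwmem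

/-- The exponential pseudo-spline symbol `a = B·c` of order `N = 2ρ` associated with
`Γ = {(θ,ρ), (-θ,ρ)}` satisfies the conditions, with shift parameter `p = 0`, for
reproduction of `span{x^j e^{θx}, x^j e^{-θx} : 0 ≤ j ≤ ρ-1}`: it takes the value `2`
at `w = e^{-θ/2^{k+1}}` and at `w⁻¹`, and its derivatives of orders `1, …, ρ-1` vanish
at both points. (Moreover `v ≠ 0`.) -/
theorem exponential_pseudoSpline_reproduction_conditions (ρ k : ℕ) (hρ : 1 ≤ ρ)
    (θ : ℂ)
    (hθ : (∃ t : ℝ, 0 < t ∧ θ = (t : ℂ)) ∨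
          (∃ β : ℝ, 0 ≤ β ∧ β < Real.pi ∧ θ = (β : ℂ) * I))
    (v : ℂ) (hv : v = (exp (θ / 2 ^ (k + 1)) + exp (-θ / 2 ^ (k + 1))) / 2)
    (B c a : ℂ → ℂ)
    (hB : ∀ z : ℂ, z ≠ 0 → B z = (z + z⁻¹ + 2 * v) ^ ρ / (2 ^ (2 * ρ - 1) * v ^ ρ))
    (hc : ∀ z : ℂ, z ≠ 0 → c z = ∑ j ∈ range ρ,
      (-1 : ℂ) ^ j * (((ρ + j - 1).choose j : ℕ) : ℂ) * (4 * v) ^ (-(j : ℤ)) *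
        (z + z⁻¹ - 2 * v) ^ j)
    (ha : ∀ z : ℂ, z ≠ 0 → a z = B z * c z) :
    v ≠ 0 ∧
    a (exp (-θ / 2 ^ (k + 1))) = 2 ∧
    a ((exp (-θ / 2 ^ (k + 1)))⁻¹) = 2 ∧
    (∀ s : ℕ, 1 ≤ s → s ≤ ρ - 1 →
      iteratedDeriv s a (exp (-θ / 2 ^ (k + 1))) = 0 ∧
      iteratedDeriv s a ((exp (-θ / 2 ^ (k + 1)))⁻¹) = 0) := by
  set x : ℂ := θ / 2 ^ (k + 1) with hx
  set w : ℂ := exp (-θ / 2 ^ (k + 1)) with hwdef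
  set u : ℂ := exp (θ / 2 ^ (k + 1)) with hudef
  have hw0 : w ≠ 0 := exp_ne_zero _
  have hu0 : u ≠ 0 := exp_ne_zero _
  have hwu : w * u = 1 := by
    rw [hwdef, hudef, ← exp_add]
    simp [neg_div]
  have hwinv : w⁻¹ = u := inv_eq_of_mul_eq_one_right hwu
  have hvne : v ≠ 0 := by
    have hcosh : v = Complex.cosh x := by
      rw [hv, Complex.cosh, hx, hudef, hwdef, neg_div]
    rcases hθ with ⟨t, ht, rfl⟩ | ⟨β, hβ0, hβπ, rfl⟩
    · have hxr : x = ((t / 2 ^ (k + 1) : ℝ) : ℂ) := by rw [hx]; push_cast; ring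
      rw [hcosh, hxr, ← Complex.ofReal_cosh]
      exact_mod_cast (Real.cosh_pos _).ne'
    · have hxr : x = ((β / 2 ^ (k + 1) : ℝ) : ℂ) * I := by rw [hx]; push_cast; ring
      rw [hcosh, hxr, Complex.cosh_mul_I, ← Complex.ofReal_cos]
      have h2 : (2 : ℝ) ≤ 2 ^ (k + 1) := by
        calc (2 : ℝ) = 2 ^ 1 := by norm_num
          _ ≤ 2 ^ (k + 1) := by
            apply pow_le_pow_right₀ (by norm_num) (by omega)
      have h2pos : (0 : ℝ) < 2 ^ (k + 1) := by positivity
      have hr0 : (0 : ℝ) ≤ β / 2 ^ (k + 1) := by positivity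
      have hr1 : β / 2 ^ (k + 1) < Real.pi / 2 := by
        have hle : β / 2 ^ (k + 1) ≤ β / 2 := by
          rw [div_le_div_iff₀ h2pos (by norm_num : (0:ℝ) < 2)]
          nlinarith
        linarith
      have hpos : 0 < Real.cos (β / 2 ^ (k + 1)) :=
        Real.cos_pos_of_mem_Ioo ⟨by linarith [Real.pi_pos], hr1⟩
      exact_mod_cast hpos.ne'
  have hsum : w + u = 2 * v := by linear_combination (-2 : ℂ) * hv
  have ha' : ∀ z : ℂ, z ≠ 0 → a z = (z + z⁻¹ + 2 * v) ^ ρ / (2 ^ (2 * ρ - 1) * v ^ ρ) *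
      ∑ j ∈ range ρ, (-1 : ℂ) ^ j * (((ρ + j - 1).choose j : ℕ) : ℂ) * (4 * v) ^ (-(j : ℤ)) *
        (z + z⁻¹ - 2 * v) ^ j := by
    intro z hz
    rw [ha z hz, hB z hz, hc z hz]
  obtain ⟨haw, hdw⟩ := key_at ρ hρ v w u hw0 hvne hwu hsum a ha'
  obtain ⟨hau, hdu⟩ := key_at ρ hρ v u w hu0 hvne (by rw [mul_comm]; exact hwu)
    (by rw [add_comm]; exact hsum) a ha'
  exact ⟨hvne, haw, by rw [hwinv]; exact hau,
    fun s h1 h2 => ⟨hdw s h1 h2, by rw [hwinv]; exact hdu s h1 h2⟩⟩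
end

section
/- Let ρ ≥ 1 and k ≥ 0 be integers, and let θ ∈ ℂ be either a positive real number or θ = iβ with β ∈ [0,π). Set v := (e^{θ/2^{k+1}} + e^{−θ/2^{k+1}})/2 (which is nonzero), and define for z ≠ 0: B(z) := (z + z⁻¹ + 2v)^ρ / (2^{2ρ−1}·v^ρ), c(z) := Σ_{j=0}^{ρ−1} (−1)^j·binom(ρ+j−1, j)·(4v)^{−j}·(z + z⁻¹ − 2v)^j, and a(z) := B(z)·c(z). Then a(z) + a(−z) = 2 for every z ≠ 0; that is, the exponential pseudo-spline symbol a = B·c is interpolatory. -/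
open Complex Finset


lemma sumG (m : ℕ) (u : ℂ) :
    ∑ j ∈ range (m+2), (((m+1+j).choose j : ℕ) : ℂ) * u ^ j
      = ∑ j ∈ range (m+2), (((m+j).choose j : ℕ) : ℂ) * u ^ j
        + u * ∑ j ∈ range (m+2), (((m+1+j).choose j : ℕ) : ℂ) * u ^ j
        - (((2*m+2).choose (m+1) : ℕ) : ℂ) * u ^ (m+2) := by
  have hG : ∑ j ∈ range (m+2), (((m+1+j).choose j : ℕ) : ℂ) * u ^ j
      = 1 + (∑ j ∈ range (m+1), (((m+j+1).choose j : ℕ) : ℂ) * u ^ (j+1)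
           + ∑ j ∈ range (m+1), (((m+j+1).choose (j+1) : ℕ) : ℂ) * u ^ (j+1)) := by
    rw [Finset.sum_range_succ', ← Finset.sum_add_distrib]
    simp only [Nat.choose_zero_right, Nat.cast_one, pow_zero, mul_one, Nat.add_zero]
    rw [add_comm]
    congr 1
    refine Finset.sum_congr rfl fun j _ => ?_
    have h1 : m+1+(j+1) = (m+j+1)+1 := by omega
    rw [h1, Nat.choose_succ_succ]
    push_cast
    ring
  have hH : ∑ j ∈ range (m+2), (((m+j).choose j : ℕ) : ℂ) * u ^ j
      = 1 + ∑ j ∈ range (m+1), (((m+j+1).choose (j+1) : ℕ) : ℂ) * u ^ (j+1) := by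
    rw [Finset.sum_range_succ']
    simp only [Nat.choose_zero_right, Nat.cast_one, pow_zero, mul_one, Nat.add_zero]
    rw [add_comm]
    refine congrArg₂ _ rfl (Finset.sum_congr rfl fun j _ => ?_)
    have h1 : m+(j+1) = (m+j)+1 := by omega
    rw [h1]
  have hu : u * ∑ j ∈ range (m+2), (((m+1+j).choose j : ℕ) : ℂ) * u ^ j
      = ∑ j ∈ range (m+1), (((m+j+1).choose j : ℕ) : ℂ) * u ^ (j+1)
        + (((2*m+2).choose (m+1) : ℕ) : ℂ) * u ^ (m+2) := by
    rw [Finset.mul_sum]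
    have : ∀ j, u * ((((m+1+j).choose j : ℕ) : ℂ) * u ^ j)
        = (((m+j+1).choose j : ℕ) : ℂ) * u ^ (j+1) := by
      intro j
      have h1 : m+1+j = m+j+1 := by omega
      rw [h1]; ring
    rw [Finset.sum_congr rfl fun j _ => this j, Finset.sum_range_succ]
    have h2 : m+(m+1)+1 = 2*m+2 := by omega
    rw [h2]
  linear_combination hG - hH - hu

lemma key (m : ℕ) : ∀ x u : ℂ, x + u = 1 →
    x^(m+1) * ∑ j ∈ range (m+1), (((m+j).choose j : ℕ) : ℂ) * u^j
      + u^(m+1) * ∑ j ∈ range (m+1), (((m+j).choose j : ℕ) : ℂ) * x^j = 1 := by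
  induction m with
  | zero =>
    intro x u h
    norm_num [Finset.sum_range_one]
    linear_combination h
  | succ m ih =>
    intro x u h
    have hx : x = 1 - u := by linear_combination h
    have hu' : u = 1 - x := by linear_combination h
    have hxGu : x * ∑ j ∈ range (m+2), (((m+1+j).choose j : ℕ) : ℂ) * u ^ j
        = ∑ j ∈ range (m+2), (((m+j).choose j : ℕ) : ℂ) * u ^ j
          - (((2*m+2).choose (m+1) : ℕ) : ℂ) * u ^ (m+2) := by
      rw [hx]; linear_combination sumG m u
    have huGx : u * ∑ j ∈ range (m+2), (((m+1+j).choose j : ℕ) : ℂ) * x ^ j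
        = ∑ j ∈ range (m+2), (((m+j).choose j : ℕ) : ℂ) * x ^ j
          - (((2*m+2).choose (m+1) : ℕ) : ℂ) * x ^ (m+2) := by
      rw [hu']; linear_combination sumG m x
    have hHu : ∑ j ∈ range (m+2), (((m+j).choose j : ℕ) : ℂ) * u ^ j
        = ∑ j ∈ range (m+1), (((m+j).choose j : ℕ) : ℂ) * u ^ j
          + (((2*m+1).choose (m+1) : ℕ) : ℂ) * u ^ (m+1) := by
      rw [Finset.sum_range_succ]
      have h1 : m+(m+1) = 2*m+1 := by omega
      rw [h1]
    have hHx : ∑ j ∈ range (m+2), (((m+j).choose j : ℕ) : ℂ) * x ^ j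
        = ∑ j ∈ range (m+1), (((m+j).choose j : ℕ) : ℂ) * x ^ j
          + (((2*m+1).choose (m+1) : ℕ) : ℂ) * x ^ (m+1) := by
      rw [Finset.sum_range_succ]
      have h1 : m+(m+1) = 2*m+1 := by omega
      rw [h1]
    have hcc : (((2*m+2).choose (m+1) : ℕ) : ℂ) = 2 * (((2*m+1).choose (m+1) : ℕ) : ℂ) := by
      have h1 : (2*m+2).choose (m+1) = 2 * ((2*m+1).choose (m+1)) := by
        have h2 : (2*m+1).choose m = (2*m+1).choose (m+1) := by
          have := Nat.choose_symm (n := 2*m+1) (k := m+1) (by omega)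
          simpa [show 2*m+1 - (m+1) = m by omega] using this
        have h3 : (2*m+2) = (2*m+1)+1 := by omega
        rw [h3, Nat.choose_succ_succ, h2, Nat.succ_eq_add_one]
        omega
      rw [h1]; push_cast; ring
    have hih := ih x u h
    calc x^(m+1+1) * ∑ j ∈ range (m+1+1), (((m+1+j).choose j : ℕ) : ℂ) * u^j
          + u^(m+1+1) * ∑ j ∈ range (m+1+1), (((m+1+j).choose j : ℕ) : ℂ) * x^j
        = x^(m+1) * (x * ∑ j ∈ range (m+2), (((m+1+j).choose j : ℕ) : ℂ) * u ^ j)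
          + u^(m+1) * (u * ∑ j ∈ range (m+2), (((m+1+j).choose j : ℕ) : ℂ) * x ^ j) := by
          ring
      _ = 1 := by
          rw [hxGu, huGx, hHu, hHx]
          linear_combination hih - (x*u)^(m+1) * hcc - (((2*m+2).choose (m+1) : ℕ) : ℂ) * (x*u)^(m+1) * h

/-- The exponential pseudo-spline symbol `a = B·c` of order `N = 2ρ` associated with
`Γ = {(θ,ρ), (-θ,ρ)}` is interpolatory: `a(z) + a(-z) = 2` for all `z ≠ 0`.
(Moreover `v ≠ 0`.) -/
theorem exponential_pseudoSpline_interpolatory_example (ρ k : ℕ) (hρ : 1 ≤ ρ)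
    (θ : ℂ)
    (hθ : (∃ t : ℝ, 0 < t ∧ θ = (t : ℂ)) ∨
          (∃ β : ℝ, 0 ≤ β ∧ β < Real.pi ∧ θ = (β : ℂ) * I))
    (v : ℂ) (hv : v = (exp (θ / 2 ^ (k + 1)) + exp (-θ / 2 ^ (k + 1))) / 2)
    (B c a : ℂ → ℂ)
    (hB : ∀ z : ℂ, z ≠ 0 → B z = (z + z⁻¹ + 2 * v) ^ ρ / (2 ^ (2 * ρ - 1) * v ^ ρ))
    (hc : ∀ z : ℂ, z ≠ 0 → c z = ∑ j ∈ range ρ,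
      (-1 : ℂ) ^ j * (((ρ + j - 1).choose j : ℕ) : ℂ) * (4 * v) ^ (-(j : ℤ)) *
        (z + z⁻¹ - 2 * v) ^ j)
    (ha : ∀ z : ℂ, z ≠ 0 → a z = B z * c z) :
    v ≠ 0 ∧ ∀ z : ℂ, z ≠ 0 → a z + a (-z) = 2 := by
  -- v ≠ 0
  have h2k : ((2:ℂ) ^ (k+1)) ≠ 0 := pow_ne_zero _ two_ne_zero
  have hv0 : v ≠ 0 := by
    rcases hθ with ⟨t, ht, rfl⟩ | ⟨β, hβ0, hβπ, rfl⟩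
    · set r : ℝ := t / 2 ^ (k+1) with hr
      have e1 : (t : ℂ) / 2 ^ (k+1) = (r : ℂ) := by rw [hr]; push_cast; ring
      have e2 : -(t : ℂ) / 2 ^ (k+1) = ((-r : ℝ) : ℂ) := by rw [hr]; push_cast; ring
      rw [hv, e1, e2, ← Complex.ofReal_exp, ← Complex.ofReal_exp]
      have : ((Real.exp r : ℝ) : ℂ) + ((Real.exp (-r) : ℝ) : ℂ)
          = (((Real.exp r + Real.exp (-r)) : ℝ) : ℂ) := by push_cast; ring
      rw [this]
      have hpos : (0:ℝ) < Real.exp r + Real.exp (-r) := by positivity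
      simp only [div_ne_zero_iff]
      constructor
      · exact_mod_cast hpos.ne'
      · norm_num
    · set φ : ℝ := β / 2 ^ (k+1) with hφ
      have e1 : (β : ℂ) * I / 2 ^ (k+1) = (φ : ℂ) * I := by rw [hφ]; push_cast; ring
      have e2 : -((β : ℂ) * I) / 2 ^ (k+1) = -(φ : ℂ) * I := by rw [hφ]; push_cast; ring
      rw [hv, e1, e2, ← Complex.two_cos, ← Complex.ofReal_cos]
      have hφpos : 0 < Real.cos φ := by
        apply Real.cos_pos_of_mem_Ioo
        constructor
        · have : (0:ℝ) < Real.pi / 2 := by positivity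
          have hφ0 : 0 ≤ φ := by
            rw [hφ]; positivity
          linarith
        · rw [hφ]
          have h2 : (2:ℝ) ≤ 2 ^ (k+1) := by
            calc (2:ℝ) = 2^1 := by norm_num
            _ ≤ 2^(k+1) := by apply pow_le_pow_right₀ one_le_two (by omega)
          rw [div_lt_iff₀ (by positivity)]
          calc β < Real.pi := hβπ
            _ ≤ Real.pi / 2 * 2 := by linarith
            _ ≤ Real.pi / 2 * 2^(k+1) := by
                apply mul_le_mul_of_nonneg_left h2
                positivity
      have h3 : (2 * ((Real.cos φ : ℝ) : ℂ)) / 2 = ((Real.cos φ : ℝ) : ℂ) := by ring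
      rw [h3]
      exact_mod_cast hφpos.ne'
  refine ⟨hv0, ?_⟩
  obtain ⟨m, rfl⟩ : ∃ m, ρ = m + 1 := ⟨ρ - 1, by omega⟩
  have h4v : (4:ℂ) * v ≠ 0 := by simp [hv0]
  -- the value of a at any nonzero point
  have hval : ∀ w : ℂ, w ≠ 0 →
      a w = 2 * ((w + w⁻¹ + 2*v)/(4*v))^(m+1) *
        ∑ j ∈ range (m+1), (((m+j).choose j : ℕ) : ℂ) * ((2*v - (w + w⁻¹))/(4*v))^j := by
    intro w hw
    set x := (w + w⁻¹ + 2*v)/(4*v) with hxdef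
    set u := (2*v - (w + w⁻¹))/(4*v) with hudef
    have hx4 : 4*v*x = w + w⁻¹ + 2*v := by rw [hxdef]; field_simp
    have hu4 : w + w⁻¹ - 2*v = -(4*v*u) := by rw [hudef]; field_simp; ring
    have hBval : B w = 2 * x^(m+1) := by
      rw [hB w hw, show 2*(m+1)-1 = 2*m+1 by omega, ← hx4]
      have h4 : (4*v)^(m+1) = 2^(2*m+2) * v^(m+1) := by
        rw [show (4:ℂ) = 2^2 by norm_num, mul_pow, ← pow_mul]
        ring_nf
      rw [show (4:ℂ)*v*x = (4*v)*x by ring, mul_pow, h4]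
      have hvpow : v^(m+1) ≠ 0 := pow_ne_zero _ hv0
      have h2pow : (2:ℂ)^(2*m+1) ≠ 0 := pow_ne_zero _ two_ne_zero
      field_simp
      ring
    have hcval : c w = ∑ j ∈ range (m+1), (((m+j).choose j : ℕ) : ℂ) * u^j := by
      rw [hc w hw]
      refine Finset.sum_congr rfl fun j _ => ?_
      rw [show m+1+j-1 = m+j by omega, hu4, zpow_neg, zpow_natCast]
      have h1 : (-(4*v*u))^j = (-1)^j * (4*v)^j * u^j := by
        rw [show -(4*v*u) = (-1) * ((4*v)*u) by ring, mul_pow, mul_pow]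
        ring
      rw [h1]
      have h2 : ((4*v)^j : ℂ) ≠ 0 := pow_ne_zero _ h4v
      field_simp
      rw [← pow_mul, mul_comm j 2, pow_mul]
      norm_num
    rw [ha w hw, hBval, hcval]
  intro z hz
  have hzneg : (-z : ℂ) ≠ 0 := neg_ne_zero.mpr hz
  have hinv : (-z)⁻¹ = -(z⁻¹) := by rw [inv_neg]
  rw [hval z hz, hval (-z) hzneg, hinv]
  set y := z + z⁻¹ with hy
  have e1 : (-z + -z⁻¹ + 2*v)/(4*v) = (2*v - y)/(4*v) := by rw [hy]; ring_nf
  have e2 : (2*v - (-z + -z⁻¹))/(4*v) = (y + 2*v)/(4*v) := by rw [hy]; ring_nf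
  rw [e1, e2]
  set x := (y + 2*v)/(4*v) with hxdef
  set u := (2*v - y)/(4*v) with hudef
  have hxu : x + u = 1 := by rw [hxdef, hudef]; field_simp; ring
  have := key m x u hxu
  linear_combination 2 * this
end
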